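/- Let G be a finite simple graph with an alternating 4-cycle ⟨a,b:c,d⟩ and let H be the result of the 2-switch on ⟨a,b:c,d⟩. Let A be the set of vertices v ∉ {a,b,c,d} whose neighborhood intersects {a,b,c,d} in exactly {a,b} or exactly {c,d}, and let B be the set of vertices v ∉ {a,b,c,d} whose neighborhood intersects {a,b,c,d} in exactly {b,c} or exactly {a,d}. Then (number of triangles in G) − (number of triangles in H) = |A| − |B|. In particular, if H ≅ G then |A| = |B|. -/
import Mathlib


open SimpleGraph

/-- An alternating 4-cycle ⟨a,b:c,d⟩: four distinct vertices with ab, cd edges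
and bc, ad non-edges. -/
def A4 {V : Type*} (G : SimpleGraph V) (a b c d : V) : Prop :=
  a ≠ b ∧ a ≠ c ∧ a ≠ d ∧ b ≠ c ∧ b ≠ d ∧ c ≠ d ∧
  G.Adj a b ∧ G.Adj c d ∧ ¬ G.Adj b c ∧ ¬ G.Adj a d

/-- The 2-switch on ⟨a,b:c,d⟩: delete edges ab, cd and add edges bc, ad. -/
def twoSwitch {V : Type*} (G : SimpleGraph V) (a b c d : V) : SimpleGraph V :=
  SimpleGraph.fromEdgeSet ((G.edgeSet \ {s(a,b), s(c,d)}) ∪ {s(b,c), s(a,d)})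

open Finset in
open scoped Classical in
lemma twoSwitch_adj {V : Type*} (G : SimpleGraph V) (a b c d x y : V) :
    (twoSwitch G a b c d).Adj x y ↔
      ((G.Adj x y ∧ s(x,y) ≠ s(a,b) ∧ s(x,y) ≠ s(c,d)) ∨
        (s(x,y) = s(b,c) ∧ b ≠ c) ∨ (s(x,y) = s(a,d) ∧ a ≠ d)) := by
  simp only [twoSwitch, fromEdgeSet_adj, Set.mem_union, Set.mem_diff, Set.mem_insert_iff,
    Set.mem_singleton_iff, mem_edgeSet]
  constructor
  · rintro ⟨(⟨hadj, hne⟩ | (h | h)), hxy⟩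
    · left; tauto
    · right; left; refine ⟨h, ?_⟩; rintro rfl; apply hxy
      rcases Sym2.eq_iff.mp h with ⟨rfl, rfl⟩ | ⟨rfl, rfl⟩ <;> simp_all
    · right; right; refine ⟨h, ?_⟩; rintro rfl; apply hxy
      rcases Sym2.eq_iff.mp h with ⟨rfl, rfl⟩ | ⟨rfl, rfl⟩ <;> simp_all
  · rintro (⟨hadj, h1, h2⟩ | (⟨h, hbc⟩ | ⟨h, had⟩))
    · exact ⟨Or.inl ⟨hadj, by tauto⟩, hadj.ne⟩
    · refine ⟨Or.inr (Or.inl h), ?_⟩; rintro rfl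
      rcases Sym2.eq_iff.mp h with ⟨rfl, rfl⟩ | ⟨rfl, rfl⟩ <;> simp_all
    · refine ⟨Or.inr (Or.inr h), ?_⟩; rintro rfl
      rcases Sym2.eq_iff.mp h with ⟨rfl, rfl⟩ | ⟨rfl, rfl⟩ <;> simp_all

lemma twoSwitch_adj_of_left_notmem {V : Type*} {G : SimpleGraph V} {a b c d x y : V}
    (hx : x ∉ ({a, b, c, d} : Set V)) :
    (twoSwitch G a b c d).Adj x y ↔ G.Adj x y := by
  simp only [Set.mem_insert_iff, Set.mem_singleton_iff, not_or] at hx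
  obtain ⟨h1, h2, h3, h4⟩ := hx
  rw [twoSwitch_adj]
  constructor
  · rintro (⟨h, _, _⟩ | (⟨h, _⟩ | ⟨h, _⟩))
    · exact h
    · rcases Sym2.eq_iff.mp h with ⟨rfl, rfl⟩ | ⟨rfl, rfl⟩ <;> simp_all
    · rcases Sym2.eq_iff.mp h with ⟨rfl, rfl⟩ | ⟨rfl, rfl⟩ <;> simp_all
  · intro h
    refine Or.inl ⟨h, ?_, ?_⟩ <;> simp [Sym2.eq_iff] <;> tauto

lemma twoSwitch_adj_of_right_notmem {V : Type*} {G : SimpleGraph V} {a b c d x y : V}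
    (hy : y ∉ ({a, b, c, d} : Set V)) :
    (twoSwitch G a b c d).Adj x y ↔ G.Adj x y := by
  rw [adj_comm, twoSwitch_adj_of_left_notmem hy, adj_comm]

open Finset in
open scoped Classical in
lemma tri_count {V : Type*} [Fintype V] (K : SimpleGraph V) {x y : V} (hxy : K.Adj x y) :
    ((K.cliqueFinset 3).filter fun T => x ∈ T ∧ y ∈ T).card =
      (Finset.univ.filter fun v => K.Adj x v ∧ K.Adj y v).card := by
  have hne : x ≠ y := hxy.ne
  have himg : ((K.cliqueFinset 3).filter fun T => x ∈ T ∧ y ∈ T) =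
      (Finset.univ.filter fun v => K.Adj x v ∧ K.Adj y v).image
        (fun v => ({x, y, v} : Finset V)) := by
    ext T
    simp only [mem_filter, mem_image, mem_cliqueFinset_iff, mem_univ, true_and]
    constructor
    · rintro ⟨⟨hclique, hcard⟩, hx, hy⟩
      have hsub : ({x, y} : Finset V) ⊆ T := by
        intro z hz; simp only [mem_insert, mem_singleton] at hz
        rcases hz with rfl | rfl <;> assumption
      have hdiffcard : (T \ {x, y}).card = 1 := by
        rw [Finset.card_sdiff_of_subset hsub, hcard, Finset.card_pair hne]
      obtain ⟨v, hv⟩ := Finset.card_eq_one.mp hdiffcard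
      have hvmem : v ∈ T \ ({x, y} : Finset V) := hv ▸ Finset.mem_singleton_self v
      rw [Finset.mem_sdiff] at hvmem
      obtain ⟨hvT, hvnot⟩ := hvmem
      simp only [mem_insert, mem_singleton, not_or] at hvnot
      obtain ⟨hvx, hvy⟩ := hvnot
      refine ⟨v, ⟨hclique hx hvT (Ne.symm hvx), hclique hy hvT (Ne.symm hvy)⟩, ?_⟩
      have hsub2 : ({x, y, v} : Finset V) ⊆ T := by
        intro z hz; simp only [mem_insert, mem_singleton] at hz
        rcases hz with rfl | rfl | rfl <;> assumption
      refine Finset.eq_of_subset_of_card_le hsub2 ?_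
      rw [hcard]
      have : ({x, y, v} : Finset V).card = 3 := by
        rw [Finset.card_insert_of_notMem (by simp [hne, Ne.symm hvx]),
          Finset.card_insert_of_notMem (by simp [Ne.symm hvy]), Finset.card_singleton]
      omega
    · rintro ⟨v, ⟨hxv, hyv⟩, rfl⟩
      refine ⟨is3Clique_triple_iff.mpr ⟨hxy, hxv, hyv⟩, by simp, by simp⟩
  rw [himg, Finset.card_image_of_injOn]
  intro v hv w hw hvw
  simp only [Finset.coe_filter, Set.mem_setOf_eq, mem_univ, true_and] at hv hw
  simp only at hvw
  have : v ∈ ({x, y, w} : Finset V) := hvw ▸ (by simp : v ∈ ({x, y, v} : Finset V))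
  simp only [mem_insert, mem_singleton] at this
  rcases this with rfl | rfl | rfl
  · exact absurd rfl hv.1.ne'
  · exact absurd rfl hv.2.ne'
  · rfl

open Finset in
open scoped Classical in
lemma common_eq {V : Type*} [Fintype V] (G : SimpleGraph V) (a b c d : V)
    (h : A4 G a b c d) :
    ((G.cliqueFinset 3).filter fun T => ¬(a ∈ T ∧ b ∈ T) ∧ ¬(c ∈ T ∧ d ∈ T)) =
      (((twoSwitch G a b c d).cliqueFinset 3).filter
        fun T => ¬(b ∈ T ∧ c ∈ T) ∧ ¬(a ∈ T ∧ d ∈ T)) := by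
  obtain ⟨hab, hac, had, hbc, hbd, hcd, gab, gcd, gbc, gad⟩ := h
  ext T
  simp only [mem_filter, mem_cliqueFinset_iff, isNClique_iff]
  constructor
  · rintro ⟨⟨hclique, hcard⟩, hnab, hncd⟩
    have hnbc : ¬(b ∈ T ∧ c ∈ T) := by
      rintro ⟨hb, hc⟩; exact gbc (hclique hb hc hbc)
    have hnad : ¬(a ∈ T ∧ d ∈ T) := by
      rintro ⟨ha, hd⟩; exact gad (hclique ha hd had)
    refine ⟨⟨?_, hcard⟩, hnbc, hnad⟩
    intro x hx y hy hne
    have hadj := hclique hx hy hne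
    rw [twoSwitch_adj]
    refine Or.inl ⟨hadj, ?_, ?_⟩
    · intro heq
      rcases Sym2.eq_iff.mp heq with ⟨rfl, rfl⟩ | ⟨rfl, rfl⟩
      · exact hnab ⟨hx, hy⟩
      · exact hnab ⟨hy, hx⟩
    · intro heq
      rcases Sym2.eq_iff.mp heq with ⟨rfl, rfl⟩ | ⟨rfl, rfl⟩
      · exact hncd ⟨hx, hy⟩
      · exact hncd ⟨hy, hx⟩
  · rintro ⟨⟨hclique, hcard⟩, hnbc, hnad⟩
    have gclique : ∀ x ∈ T, ∀ y ∈ T, x ≠ y → G.Adj x y := by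
      intro x hx y hy hne
      have hadj := hclique hx hy hne
      rw [twoSwitch_adj] at hadj
      rcases hadj with ⟨hadj, _, _⟩ | (⟨heq, _⟩ | ⟨heq, _⟩)
      · exact hadj
      · rcases Sym2.eq_iff.mp heq with ⟨rfl, rfl⟩ | ⟨rfl, rfl⟩
        · exact absurd ⟨hx, hy⟩ hnbc
        · exact absurd ⟨hy, hx⟩ hnbc
      · rcases Sym2.eq_iff.mp heq with ⟨rfl, rfl⟩ | ⟨rfl, rfl⟩
        · exact absurd ⟨hx, hy⟩ hnad
        · exact absurd ⟨hy, hx⟩ hnad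
    refine ⟨⟨fun {x} hx {y} hy hne => gclique x hx y hy hne, hcard⟩, ?_, ?_⟩
    · rintro ⟨ha, hb⟩
      have := hclique ha hb hab
      rw [twoSwitch_adj] at this
      rcases this with ⟨_, h1, _⟩ | (⟨heq, _⟩ | ⟨heq, _⟩)
      · exact h1 rfl
      · rcases Sym2.eq_iff.mp heq with ⟨h1', h2'⟩ | ⟨h1', h2'⟩ <;> simp_all
      · rcases Sym2.eq_iff.mp heq with ⟨h1', h2'⟩ | ⟨h1', h2'⟩ <;> simp_all
    · rintro ⟨hc, hd⟩
      have := hclique hc hd hcd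
      rw [twoSwitch_adj] at this
      rcases this with ⟨_, _, h2⟩ | (⟨heq, _⟩ | ⟨heq, _⟩)
      · exact h2 rfl
      · rcases Sym2.eq_iff.mp heq with ⟨h1', h2'⟩ | ⟨h1', h2'⟩ <;> simp_all
      · rcases Sym2.eq_iff.mp heq with ⟨h1', h2'⟩ | ⟨h1', h2'⟩ <;> simp_all

open Finset in
lemma inter_eq_pair {V : Type*} [DecidableEq V] (G : SimpleGraph V) {v p q r s : V}
    (hpq : p ≠ q) (hpr : p ≠ r) (hps : p ≠ s) (hqr : q ≠ r) (hqs : q ≠ s) (hrs : r ≠ s)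
    [Fintype (G.neighborSet v)] :
    G.neighborFinset v ∩ ({p, q, r, s} : Finset V) = {p, q} ↔
      (G.Adj v p ∧ G.Adj v q ∧ ¬G.Adj v r ∧ ¬G.Adj v s) := by
  constructor
  · intro hEq
    have hmem : ∀ w, w ∈ G.neighborFinset v ∩ ({p, q, r, s} : Finset V) ↔
        w ∈ ({p, q} : Finset V) := fun w => by rw [hEq]
    refine ⟨?_, ?_, ?_, ?_⟩
    · have := (hmem p).mpr (by simp)
      rw [Finset.mem_inter, mem_neighborFinset] at this; exact this.1
    · have := (hmem q).mpr (by simp)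
      rw [Finset.mem_inter, mem_neighborFinset] at this; exact this.1
    · intro hadj
      have := (hmem r).mp (by rw [Finset.mem_inter, mem_neighborFinset]; exact ⟨hadj, by simp⟩)
      simp only [Finset.mem_insert, Finset.mem_singleton] at this; tauto
    · intro hadj
      have := (hmem s).mp (by rw [Finset.mem_inter, mem_neighborFinset]; exact ⟨hadj, by simp⟩)
      simp only [Finset.mem_insert, Finset.mem_singleton] at this; tauto
  · rintro ⟨h1, h2, h3, h4⟩
    ext w
    simp only [Finset.mem_inter, mem_neighborFinset, Finset.mem_insert, Finset.mem_singleton]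
    constructor
    · rintro ⟨hadj, (rfl | rfl | rfl | rfl)⟩ <;> tauto
    · rintro (rfl | rfl) <;> tauto

lemma ite_identity (pa pb pc pd : Prop) [Decidable pa] [Decidable pb] [Decidable pc]
    [Decidable pd] :
    ((if pa ∧ pb then (1 : ℤ) else 0) + (if pc ∧ pd then (1 : ℤ) else 0))
        - (if pb ∧ pc then (1 : ℤ) else 0) - (if pa ∧ pd then (1 : ℤ) else 0) =
      (if (pa ∧ pb ∧ ¬pc ∧ ¬pd) ∨ (pc ∧ pd ∧ ¬pa ∧ ¬pb) then (1 : ℤ) else 0)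
        - (if (pb ∧ pc ∧ ¬pa ∧ ¬pd) ∨ (pa ∧ pd ∧ ¬pb ∧ ¬pc) then (1 : ℤ) else 0) := by
  by_cases ha : pa <;> by_cases hb : pb <;> by_cases hc : pc <;> by_cases hd : pd <;>
    simp [ha, hb, hc, hd]

open scoped Classical in
lemma cardZ {V : Type*} [Fintype V] (p : V → Prop) [DecidablePred p] :
    (((Finset.univ : Finset V).filter p).card : ℤ) =
      ∑ v : V, if p v then (1 : ℤ) else 0 := by
  rw [Finset.card_filter]
  push_cast
  exact Finset.sum_congr rfl fun v _ => by split <;> simp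

open scoped Classical in
lemma iso_card_cliqueFinset {V : Type*} [Fintype V] (K L : SimpleGraph V) (n : ℕ)
    (e : K ≃g L) : (K.cliqueFinset n).card = (L.cliqueFinset n).card := by
  have himg : ∀ (K' L' : SimpleGraph V) (e' : K' ≃g L') (T : Finset V),
      T ∈ K'.cliqueFinset n → T.image e' ∈ L'.cliqueFinset n := by
    intro K' L' e' T hT
    rw [SimpleGraph.mem_cliqueFinset_iff] at hT ⊢
    obtain ⟨hclique, hcard⟩ := hT
    constructor
    · intro x hx y hy hne
      simp only [Finset.coe_image, Set.mem_image, Finset.mem_coe] at hx hy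
      obtain ⟨u, hu, rfl⟩ := hx
      obtain ⟨w, hw, rfl⟩ := hy
      exact e'.map_rel_iff.mpr (hclique hu hw (fun h' => hne (by rw [h'])))
    · rw [Finset.card_image_of_injective _ (EquivLike.injective e'), hcard]
  apply Finset.card_bij' (i := fun T _ => T.image e) (j := fun T _ => T.image e.symm)
  · intro T _
    rw [Finset.image_image]
    have h' : (⇑e.symm ∘ ⇑e) = id := by
      funext z; simp
    rw [h', Finset.image_id]
  · intro T _
    rw [Finset.image_image]
    have h' : (⇑e ∘ ⇑e.symm) = id := by
      funext z; simp
    rw [h', Finset.image_id]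
  · intro T hT; exact himg K L e T hT
  · intro T hT; exact himg L K e.symm T hT

set_option maxHeartbeats 1600000 in
open scoped Classical in
theorem stmt_6 {V : Type*} [Fintype V] (G : SimpleGraph V) (a b c d : V)
    (h : A4 G a b c d) :
    let H := twoSwitch G a b c d
    let A := Finset.univ.filter fun v : V => v ∉ ({a, b, c, d} : Set V) ∧
      (G.neighborFinset v ∩ {a, b, c, d} = {a, b} ∨
        G.neighborFinset v ∩ {a, b, c, d} = {c, d})
    let B := Finset.univ.filter fun v : V => v ∉ ({a, b, c, d} : Set V) ∧
      (G.neighborFinset v ∩ {a, b, c, d} = {b, c} ∨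
        G.neighborFinset v ∩ {a, b, c, d} = {a, d})
    ((G.cliqueFinset 3).card - ((H.cliqueFinset 3).card : ℤ) =
        (A.card : ℤ) - (B.card : ℤ)) ∧
      (Nonempty (H ≃g G) → A.card = B.card) := by
  intro H A B
  obtain ⟨hab, hac, had, hbc, hbd, hcd, gab, gcd, gbc, gad⟩ := h
  -- adjacency facts in H
  have hHbc : H.Adj b c := by
    show (twoSwitch G a b c d).Adj b c
    rw [twoSwitch_adj]; exact Or.inr (Or.inl ⟨rfl, hbc⟩)
  have hHad : H.Adj a d := by
    show (twoSwitch G a b c d).Adj a d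
    rw [twoSwitch_adj]; exact Or.inr (Or.inr ⟨rfl, had⟩)
  have hnHab : ¬ H.Adj a b := by
    show ¬ (twoSwitch G a b c d).Adj a b
    rw [twoSwitch_adj]
    rintro (⟨_, h1, _⟩ | (⟨heq, _⟩ | ⟨heq, _⟩))
    · exact h1 rfl
    · rcases Sym2.eq_iff.mp heq with ⟨h1', h2'⟩ | ⟨h1', h2'⟩ <;> simp_all
    · rcases Sym2.eq_iff.mp heq with ⟨h1', h2'⟩ | ⟨h1', h2'⟩ <;> simp_all
  have hnHcd : ¬ H.Adj c d := by
    show ¬ (twoSwitch G a b c d).Adj c d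
    rw [twoSwitch_adj]
    rintro (⟨_, _, h2⟩ | (⟨heq, _⟩ | ⟨heq, _⟩))
    · exact h2 rfl
    · rcases Sym2.eq_iff.mp heq with ⟨h1', h2'⟩ | ⟨h1', h2'⟩ <;> simp_all
    · rcases Sym2.eq_iff.mp heq with ⟨h1', h2'⟩ | ⟨h1', h2'⟩ <;> simp_all
  -- the four-element set has cardinality 4
  have hcard4 : ({a, b, c, d} : Finset V).card = 4 := by
    rw [Finset.card_insert_of_notMem (by simp [hab, hac, had]),
      Finset.card_insert_of_notMem (by simp [hbc, hbd]),
      Finset.card_insert_of_notMem (by simp [hcd]), Finset.card_singleton]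
  -- splitting a triangle count
  have hsplit : ∀ (K : SimpleGraph V) (p q r s : V), p ≠ q → r ≠ s →
      ({p, q, r, s} : Finset V).card = 4 →
      ((K.cliqueFinset 3).card : ℤ) =
        ((K.cliqueFinset 3).filter fun T => p ∈ T ∧ q ∈ T).card +
        ((K.cliqueFinset 3).filter fun T => r ∈ T ∧ s ∈ T).card +
        ((K.cliqueFinset 3).filter fun T => ¬(p ∈ T ∧ q ∈ T) ∧ ¬(r ∈ T ∧ s ∈ T)).card := by
    intro K p q r s hpq hrs hc4
    have key : ∀ T ∈ K.cliqueFinset 3, ¬((p ∈ T ∧ q ∈ T) ∧ (r ∈ T ∧ s ∈ T)) := by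
      rintro T hT ⟨⟨hp, hq⟩, hr, hs⟩
      have hsub : ({p, q, r, s} : Finset V) ⊆ T := by
        intro z hz; simp only [Finset.mem_insert, Finset.mem_singleton] at hz
        rcases hz with rfl | rfl | rfl | rfl <;> assumption
      have := Finset.card_le_card hsub
      rw [hc4, (SimpleGraph.mem_cliqueFinset_iff.mp hT).card_eq] at this
      omega
    have e1 := Finset.card_filter_add_card_filter_not
      (s := K.cliqueFinset 3) (p := fun T => p ∈ T ∧ q ∈ T)
    have e2 := Finset.card_filter_add_card_filter_not
      (s := (K.cliqueFinset 3).filter fun T => ¬(p ∈ T ∧ q ∈ T))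
      (p := fun T => r ∈ T ∧ s ∈ T)
    rw [Finset.filter_filter, Finset.filter_filter] at e2
    have e3 : ((K.cliqueFinset 3).filter fun T => ¬(p ∈ T ∧ q ∈ T) ∧ (r ∈ T ∧ s ∈ T)) =
        ((K.cliqueFinset 3).filter fun T => r ∈ T ∧ s ∈ T) := by
      apply Finset.filter_congr
      intro T hT
      constructor
      · tauto
      · intro hrs'; exact ⟨fun hpq' => key T hT ⟨hpq', hrs'⟩, hrs'⟩
    rw [e3] at e2
    push_cast [← e1, ← e2]
    ring
  have hGsplit := hsplit G a b c d hab hcd hcard4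
  have hset_bcad : ({b, c, a, d} : Finset V) = ({a, b, c, d} : Finset V) := by
    ext z; simp only [Finset.mem_insert, Finset.mem_singleton]; tauto
  have hcard4' : ({b, c, a, d} : Finset V).card = 4 := by rw [hset_bcad]; exact hcard4
  have hHsplit := hsplit H b c a d hbc had hcard4'
  -- common triangles
  have hcommon := common_eq G a b c d
    ⟨hab, hac, had, hbc, hbd, hcd, gab, gcd, gbc, gad⟩
  -- per-pair triangle counts
  have t1 := tri_count G gab
  have t2 := tri_count G gcd
  have t3 := tri_count H hHbc
  have t4 := tri_count H hHad
  have hmain : ((G.cliqueFinset 3).card : ℤ) - ((H.cliqueFinset 3).card : ℤ) =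
      ((Finset.univ.filter fun v => G.Adj a v ∧ G.Adj b v).card : ℤ)
      + ((Finset.univ.filter fun v => G.Adj c v ∧ G.Adj d v).card : ℤ)
      - ((Finset.univ.filter fun v => H.Adj b v ∧ H.Adj c v).card : ℤ)
      - ((Finset.univ.filter fun v => H.Adj a v ∧ H.Adj d v).card : ℤ) := by
    rw [hGsplit, hHsplit, t1, t2, t3, t4, hcommon]
    push_cast
    ring
  -- rewrite the RHS as a sum over vertices
  have hA : (A.card : ℤ) = ∑ v : V, if v ∉ ({a, b, c, d} : Set V) ∧
      ((G.Adj v a ∧ G.Adj v b ∧ ¬G.Adj v c ∧ ¬G.Adj v d) ∨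
        (G.Adj v c ∧ G.Adj v d ∧ ¬G.Adj v a ∧ ¬G.Adj v b)) then (1 : ℤ) else 0 := by
    show ((Finset.univ.filter _).card : ℤ) = _
    rw [cardZ]
    apply Finset.sum_congr rfl
    intro v _
    congr 1
    apply propext
    constructor
    · rintro ⟨hv, hor⟩
      refine ⟨hv, ?_⟩
      rcases hor with heq | heq
      · exact Or.inl ((inter_eq_pair G hab hac had hbc hbd hcd).mp heq)
      · have hswap : ({a, b, c, d} : Finset V) = ({c, d, a, b} : Finset V) := by
          ext z; simp only [Finset.mem_insert, Finset.mem_singleton]; tauto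
        rw [hswap] at heq
        exact Or.inr ((inter_eq_pair G hcd hac.symm hbc.symm had.symm hbd.symm hab).mp heq)
    · rintro ⟨hv, hor⟩
      refine ⟨hv, ?_⟩
      rcases hor with hadj | hadj
      · exact Or.inl ((inter_eq_pair G hab hac had hbc hbd hcd).mpr hadj)
      · have hswap : ({a, b, c, d} : Finset V) = ({c, d, a, b} : Finset V) := by
          ext z; simp only [Finset.mem_insert, Finset.mem_singleton]; tauto
        rw [hswap]
        exact Or.inr ((inter_eq_pair G hcd hac.symm hbc.symm had.symm hbd.symm hab).mpr hadj)
  have hB : (B.card : ℤ) = ∑ v : V, if v ∉ ({a, b, c, d} : Set V) ∧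
      ((G.Adj v b ∧ G.Adj v c ∧ ¬G.Adj v a ∧ ¬G.Adj v d) ∨
        (G.Adj v a ∧ G.Adj v d ∧ ¬G.Adj v b ∧ ¬G.Adj v c)) then (1 : ℤ) else 0 := by
    show ((Finset.univ.filter _).card : ℤ) = _
    rw [cardZ]
    apply Finset.sum_congr rfl
    intro v _
    congr 1
    apply propext
    have hswap1 : ({a, b, c, d} : Finset V) = ({b, c, a, d} : Finset V) := by
      ext z; simp only [Finset.mem_insert, Finset.mem_singleton]; tauto
    have hswap2 : ({a, b, c, d} : Finset V) = ({a, d, b, c} : Finset V) := by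
      ext z; simp only [Finset.mem_insert, Finset.mem_singleton]; tauto
    constructor
    · rintro ⟨hv, hor⟩
      refine ⟨hv, ?_⟩
      rcases hor with heq | heq
      · rw [hswap1] at heq
        exact Or.inl ((inter_eq_pair G hbc hab.symm hbd hac.symm hcd had).mp heq)
      · rw [hswap2] at heq
        exact Or.inr ((inter_eq_pair G had hab hac hbd.symm hcd.symm hbc).mp heq)
    · rintro ⟨hv, hor⟩
      refine ⟨hv, ?_⟩
      rcases hor with hadj | hadj
      · left
        rw [hswap1]
        exact (inter_eq_pair G hbc hab.symm hbd hac.symm hcd had).mpr hadj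
      · right
        rw [hswap2]
        exact (inter_eq_pair G had hab hac hbd.symm hcd.symm hbc).mpr hadj
  -- negated adjacency facts in convenient orientations
  have gad' : ¬ G.Adj d a := fun h' => gad h'.symm
  have gbc' : ¬ G.Adj c b := fun h' => gbc h'.symm
  have hnHab' : ¬ H.Adj b a := fun h' => hnHab h'.symm
  have hnHcd' : ¬ H.Adj d c := fun h' => hnHcd h'.symm
  -- pointwise identity
  have hpoint : ∀ v : V,
      ((if G.Adj a v ∧ G.Adj b v then (1 : ℤ) else 0)
        + (if G.Adj c v ∧ G.Adj d v then (1 : ℤ) else 0))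
        - (if H.Adj b v ∧ H.Adj c v then (1 : ℤ) else 0)
        - (if H.Adj a v ∧ H.Adj d v then (1 : ℤ) else 0) =
      (if v ∉ ({a, b, c, d} : Set V) ∧
          ((G.Adj v a ∧ G.Adj v b ∧ ¬G.Adj v c ∧ ¬G.Adj v d) ∨
            (G.Adj v c ∧ G.Adj v d ∧ ¬G.Adj v a ∧ ¬G.Adj v b)) then (1 : ℤ) else 0)
        - (if v ∉ ({a, b, c, d} : Set V) ∧
          ((G.Adj v b ∧ G.Adj v c ∧ ¬G.Adj v a ∧ ¬G.Adj v d) ∨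
            (G.Adj v a ∧ G.Adj v d ∧ ¬G.Adj v b ∧ ¬G.Adj v c)) then (1 : ℤ) else 0) := by
    intro v
    by_cases hv : v ∈ ({a, b, c, d} : Set V)
    · have hv' := hv
      simp only [Set.mem_insert_iff, Set.mem_singleton_iff] at hv'
      rcases hv' with rfl | rfl | rfl | rfl <;>
        simp [hv, gad, gbc, gad', gbc', hnHab, hnHcd, hnHab', hnHcd']
    · have e1 : H.Adj b v ↔ G.Adj b v := twoSwitch_adj_of_right_notmem hv
      have e2 : H.Adj c v ↔ G.Adj c v := twoSwitch_adj_of_right_notmem hv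
      have e3 : H.Adj a v ↔ G.Adj a v := twoSwitch_adj_of_right_notmem hv
      have e4 : H.Adj d v ↔ G.Adj d v := twoSwitch_adj_of_right_notmem hv
      have c1 : G.Adj a v ↔ G.Adj v a := adj_comm G a v
      have c2 : G.Adj b v ↔ G.Adj v b := adj_comm G b v
      have c3 : G.Adj c v ↔ G.Adj v c := adj_comm G c v
      have c4 : G.Adj d v ↔ G.Adj v d := adj_comm G d v
      rw [e1, e2, e3, e4, c1, c2, c3, c4,
        if_congr (and_iff_right hv) rfl rfl, if_congr (and_iff_right hv) rfl rfl]
      exact ite_identity (G.Adj v a) (G.Adj v b) (G.Adj v c) (G.Adj v d)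
  have hfirst : ((G.cliqueFinset 3).card : ℤ) - ((H.cliqueFinset 3).card : ℤ) =
      (A.card : ℤ) - (B.card : ℤ) := by
    rw [hmain, hA, hB, cardZ, cardZ, cardZ, cardZ,
      ← Finset.sum_add_distrib, ← Finset.sum_sub_distrib, ← Finset.sum_sub_distrib,
      ← Finset.sum_sub_distrib]
    exact Finset.sum_congr rfl fun v _ => hpoint v
  refine ⟨hfirst, ?_⟩
  rintro ⟨e⟩
  have hcards : (G.cliqueFinset 3).card = (H.cliqueFinset 3).card :=
    iso_card_cliqueFinset G H 3 e.symm
  have hz : ((G.cliqueFinset 3).card : ℤ) = ((H.cliqueFinset 3).card : ℤ) := by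
    exact_mod_cast hcards
  have : (A.card : ℤ) = (B.card : ℤ) := by omega
  exact_mod_cast this
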